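/- For every integer k ≥ 1, the integral of 1/√((1-r₁)(r₁-r₂)⋯(r_{k-1}-r_k)) over the simplex 0 < r_k < ⋯ < r₁ < 1 equals Γ(1/2)^k / Γ((k+2)/2). -/

import Mathlib

open MeasureTheory Real ENNReal


/-- Real scaled beta integral, derived from the complex one. -/
lemma real_beta_scaled {p q s : ℝ} (hp : 0 < p) (hq : 0 < q) (hs : 0 < s) :
    ∫ x in (0:ℝ)..s, x ^ (p - 1) * (s - x) ^ (q - 1)
      = s ^ (p + q - 1) * (Gamma p * Gamma q / Gamma (p + q)) := by
  have hB := Complex.betaIntegral_scaled (p : ℂ) (q : ℂ) hs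
  have hG := Complex.Gamma_mul_Gamma_eq_betaIntegral
    (s := (p:ℂ)) (t := (q:ℂ)) (by simpa using hp) (by simpa using hq)
  have hGne : Complex.Gamma ((p:ℂ) + q) ≠ 0 := by
    rw [← Complex.ofReal_add, Complex.Gamma_ofReal]
    exact_mod_cast (Real.Gamma_pos_of_pos (by linarith)).ne'
  have hBval : Complex.betaIntegral p q
      = Complex.Gamma p * Complex.Gamma q / Complex.Gamma ((p:ℂ) + q) := by
    rw [eq_div_iff hGne]; linear_combination -hG
  have key : (∫ x in (0:ℝ)..s, (x:ℂ) ^ ((p:ℂ) - 1) * ((s:ℂ) - x) ^ ((q:ℂ) - 1))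
      = ((s ^ (p + q - 1) * (Gamma p * Gamma q / Gamma (p + q)) : ℝ) : ℂ) := by
    rw [hB, hBval]
    rw [show ((p:ℂ) + q - 1) = ((p + q - 1 : ℝ) : ℂ) by push_cast; ring,
      show ((p:ℂ) + q) = ((p + q : ℝ) : ℂ) by push_cast; ring,
      ← Complex.ofReal_cpow hs.le, Complex.Gamma_ofReal, Complex.Gamma_ofReal,
      Complex.Gamma_ofReal]
    push_cast; ring
  have heq : ∀ x ∈ Set.uIcc (0:ℝ) s,
      ((x ^ (p - 1) * (s - x) ^ (q - 1) : ℝ) : ℂ)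
        = (x:ℂ) ^ ((p:ℂ) - 1) * ((s:ℂ) - x) ^ ((q:ℂ) - 1) := by
    intro x hx
    rw [Set.uIcc_of_le hs.le] at hx
    rw [show ((p:ℂ) - 1) = ((p - 1 : ℝ) : ℂ) by push_cast; ring,
      show ((q:ℂ) - 1) = ((q - 1 : ℝ) : ℂ) by push_cast; ring,
      show ((s:ℂ) - x) = ((s - x : ℝ) : ℂ) by push_cast; ring,
      ← Complex.ofReal_cpow hx.1, ← Complex.ofReal_cpow (sub_nonneg.2 hx.2)]
    push_cast; ring
  have := intervalIntegral.integral_congr (μ := volume)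
    (f := fun x : ℝ => ((x ^ (p - 1) * (s - x) ^ (q - 1) : ℝ) : ℂ))
    (g := fun x : ℝ => (x:ℂ) ^ ((p:ℂ) - 1) * ((s:ℂ) - x) ^ ((q:ℂ) - 1)) (fun x hx => heq x hx)
  rw [← this, intervalIntegral.integral_ofReal] at key
  exact_mod_cast key

lemma cont_rpow {a : ℝ} (ha : 0 ≤ a) (s : Set ℝ) : ContinuousOn (fun x : ℝ => x ^ a) s :=
  fun x _ => (Real.continuousAt_rpow_const x a (Or.inr ha)).continuousWithinAt

lemma inner_integrable {a s : ℝ} (ha : 0 ≤ a) (hs : 0 < s) :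
    IntervalIntegrable (fun x => x ^ a * (s - x) ^ (-(1/2) : ℝ)) volume 0 s := by
  have h1 : IntervalIntegrable (fun x : ℝ => x ^ (-(1/2) : ℝ)) volume 0 s :=
    intervalIntegral.intervalIntegrable_rpow' (by norm_num)
  have h2 := h1.comp_sub_left s
  simp only [sub_zero, sub_self] at h2
  exact (h2.continuousOn_mul (cont_rpow ha _)).symm

lemma inner_lintegral {a s : ℝ} (ha : 0 ≤ a) (hs : 0 < s) :
    ∫⁻ x in Set.Ioo 0 s, ENNReal.ofReal (x ^ a * (Real.sqrt (s - x))⁻¹)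
      = ENNReal.ofReal (s ^ (a + 1/2) * (Gamma (a+1) * Gamma (1/2) / Gamma (a + 1 + 1/2))) := by
  have hcong : ∫⁻ x in Set.Ioo 0 s, ENNReal.ofReal (x ^ a * (Real.sqrt (s - x))⁻¹)
      = ∫⁻ x in Set.Ioo 0 s, ENNReal.ofReal (x ^ a * (s - x) ^ (-(1/2) : ℝ)) := by
    refine setLIntegral_congr_fun measurableSet_Ioo ?_
    intro x hx
    dsimp only
    rw [Real.sqrt_eq_rpow, ← Real.rpow_neg (by linarith [hx.2])]
  rw [hcong]
  have hInt : IntegrableOn (fun x => x ^ a * (s - x) ^ (-(1/2) : ℝ)) (Set.Ioo 0 s) volume :=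
    (((inner_integrable ha hs).1).mono_set Set.Ioo_subset_Ioc_self)
  rw [← ofReal_integral_eq_lintegral_ofReal hInt]
  · rw [← MeasureTheory.integral_Ioc_eq_integral_Ioo,
      ← intervalIntegral.integral_of_le hs.le]
    have := real_beta_scaled (p := a + 1) (q := 1/2) (s := s) (by linarith) (by norm_num) hs
    rw [show (a + 1 - 1 : ℝ) = a by ring, show ((1:ℝ)/2 - 1 : ℝ) = -(1/2) by ring,
      show (a + 1 + 1/2 - 1 : ℝ) = a + 1/2 by ring] at this
    rw [this]
  · filter_upwards [ae_restrict_mem measurableSet_Ioo] with x hx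
    have : (0:ℝ) ≤ s - x := by linarith [hx.2]
    exact mul_nonneg (Real.rpow_nonneg hx.1.le a) (Real.rpow_nonneg this _)

def S (n : ℕ) : Set (Fin n → ℝ) :=
  {r | (∀ i, 0 < r i ∧ r i < 1) ∧ ∀ i j : Fin n, i < j → r j < r i}

lemma measurableSet_S (n : ℕ) : MeasurableSet (S n) := by
  have : S n = (⋂ i, ({r : Fin n → ℝ | 0 < r i} ∩ {r | r i < 1})) ∩
      ⋂ i, ⋂ j, ⋂ (_ : i < j), {r : Fin n → ℝ | r j < r i} := by
    ext r
    simp [S, Set.mem_iInter, forall_and]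
  rw [this]
  refine MeasurableSet.inter (MeasurableSet.iInter fun i => MeasurableSet.inter ?_ ?_)
    (MeasurableSet.iInter fun i => MeasurableSet.iInter fun j => MeasurableSet.iInter fun _ => ?_)
  · exact measurableSet_lt measurable_const (measurable_pi_apply i)
  · exact measurableSet_lt (measurable_pi_apply i) measurable_const
  · exact measurableSet_lt (measurable_pi_apply j) (measurable_pi_apply i)

lemma snoc_mem_S {k : ℕ} (y : Fin (k+1) → ℝ) (x : ℝ) :
    (Fin.snoc y x : Fin (k+2) → ℝ) ∈ S (k+2) ↔
      y ∈ S (k+1) ∧ x ∈ Set.Ioo 0 (y (Fin.last k)) := by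
  constructor
  · rintro ⟨hb, ho⟩
    refine ⟨⟨fun i => ?_, fun i j hij => ?_⟩, ?_, ?_⟩
    · simpa [Fin.snoc_castSucc] using hb i.castSucc
    · simpa [Fin.snoc_castSucc] using
        ho i.castSucc j.castSucc (Fin.castSucc_lt_castSucc_iff.mpr hij)
    · simpa [Fin.snoc_last] using (hb (Fin.last (k+1))).1
    · simpa [Fin.snoc_castSucc, Fin.snoc_last] using
        ho (Fin.castSucc (Fin.last k)) (Fin.last (k+1)) (Fin.castSucc_lt_last _)
  · rintro ⟨⟨hb, ho⟩, hx0, hxy⟩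
    have hmono : ∀ i : Fin (k+1), y (Fin.last k) ≤ y i := by
      intro i
      rcases eq_or_lt_of_le (Fin.le_last i) with h | h
      · rw [h]
      · exact (ho i (Fin.last k) h).le
    constructor
    · intro i
      rcases Fin.eq_castSucc_or_eq_last i with ⟨i', rfl⟩ | rfl
      · simpa [Fin.snoc_castSucc] using hb i'
      · simp only [Fin.snoc_last]
        exact ⟨hx0, hxy.trans (hb (Fin.last k)).2⟩
    · intro i j hij
      rcases Fin.eq_castSucc_or_eq_last j with ⟨j', rfl⟩ | rfl
      · rcases Fin.eq_castSucc_or_eq_last i with ⟨i', rfl⟩ | rfl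
        · simp only [Fin.snoc_castSucc]
          exact ho i' j' (Fin.castSucc_lt_castSucc_iff.mp hij)
        · exact absurd hij (not_lt.mpr (Fin.castSucc_lt_last j').le)
      · rcases Fin.eq_castSucc_or_eq_last i with ⟨i', rfl⟩ | rfl
        · simp only [Fin.snoc_castSucc, Fin.snoc_last]
          exact hxy.trans_le (hmono i')
        · exact absurd hij (lt_irrefl _)

lemma measF {n : ℕ} (a : ℝ) : Measurable (fun r : Fin (n+1) → ℝ =>
    ENNReal.ofReal ((r (Fin.last n)) ^ a *
      (Real.sqrt ((1 - r 0) * ∏ i : Fin n, (r i.castSucc - r i.succ)))⁻¹)) := by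
  apply Measurable.ennreal_ofReal
  apply Measurable.mul
  · fun_prop
  · apply Measurable.inv
    apply Measurable.sqrt
    exact (measurable_const.sub (measurable_pi_apply 0)).mul
      (Finset.measurable_prod _ fun i _ =>
        (measurable_pi_apply _).sub (measurable_pi_apply _))


lemma key_lemma (k : ℕ) : ∀ a : ℝ, 0 ≤ a →
    (∫⁻ r : Fin (k+1) → ℝ in S (k+1),
      ENNReal.ofReal ((r (Fin.last k)) ^ a *
        (Real.sqrt ((1 - r 0) * ∏ i : Fin k, (r i.castSucc - r i.succ)))⁻¹))
    = ENNReal.ofReal (Gamma (a+1) * Gamma (1/2) ^ (k+1) / Gamma (a + 1 + ((k:ℝ)+1)/2)) := by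
  induction k with
  | zero =>
    intro a ha
    rw [← lintegral_indicator (measurableSet_S 1)]
    erw [← MeasurePreserving.lintegral_comp_emb
        ((volume_preserving_funUnique (Fin 1) ℝ).symm (MeasurableEquiv.funUnique (Fin 1) ℝ))
        (MeasurableEquiv.measurableEmbedding _)]
    have h1 : ∀ x : ℝ, (S 1).indicator
        (fun r : Fin 1 → ℝ => ENNReal.ofReal ((r (Fin.last 0)) ^ a *
          (Real.sqrt ((1 - r 0) * ∏ i : Fin 0, (r i.castSucc - r i.succ)))⁻¹))
        ((MeasurableEquiv.funUnique (Fin 1) ℝ).symm x)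
        = (Set.Ioo (0:ℝ) 1).indicator (fun x => ENNReal.ofReal (x ^ a * (Real.sqrt (1 - x))⁻¹)) x := by
      intro x
      have hmem : (fun _ => x : Fin 1 → ℝ) ∈ S 1 ↔ x ∈ Set.Ioo (0:ℝ) 1 := by
        constructor
        · rintro ⟨hb, -⟩; exact (hb 0 : _)
        · rintro ⟨h0, h1⟩
          exact ⟨fun i => ⟨h0, h1⟩, fun i j hij => absurd (Subsingleton.elim i j ▸ hij) (lt_irrefl j)⟩
      have he : (MeasurableEquiv.funUnique (Fin 1) ℝ).symm x = fun _ => x := rfl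
      rw [he]
      by_cases hx : x ∈ Set.Ioo (0:ℝ) 1
      · rw [Set.indicator_of_mem (hmem.mpr hx), Set.indicator_of_mem hx]
        simp
      · rw [Set.indicator_of_notMem (fun h => hx (hmem.mp h)), Set.indicator_of_notMem hx]
    simp_rw [h1]
    rw [lintegral_indicator measurableSet_Ioo, inner_lintegral ha one_pos]
    norm_num

  | succ k ih =>
    intro a ha
    set F : (Fin (k+2) → ℝ) → ℝ≥0∞ := fun r =>
      ENNReal.ofReal ((r (Fin.last (k+1))) ^ a *
        (Real.sqrt ((1 - r 0) * ∏ i : Fin (k+1), (r i.castSucc - r i.succ)))⁻¹) with hF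
    have hFmeas : Measurable F := measF a
    set C : ℝ := Gamma (a+1) * Gamma (1/2) / Gamma (a + 1 + 1/2) with hC
    have hCpos : 0 < C := by
      apply div_pos (mul_pos (Gamma_pos_of_pos (by linarith)) (Gamma_pos_of_pos (by norm_num)))
        (Gamma_pos_of_pos (by linarith))
    -- inner computation
    have hinner : ∀ y : Fin (k+1) → ℝ, (∫⁻ x, Set.indicator (S (k+2)) F (Fin.snoc y x)) =
        Set.indicator (S (k+1)) (fun y =>
          ENNReal.ofReal ((Real.sqrt ((1 - y 0) * ∏ i : Fin k, (y i.castSucc - y i.succ)))⁻¹) *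
          ENNReal.ofReal ((y (Fin.last k)) ^ (a + 1/2) * C)) y := by
      intro y
      by_cases hy : y ∈ S (k+1)
      · rw [Set.indicator_of_mem hy]
        obtain ⟨hb, ho⟩ := hy
        have hylast : 0 < y (Fin.last k) := (hb _).1
        have hA : 0 < (1 - y 0) * ∏ i : Fin k, (y i.castSucc - y i.succ) := by
          have h1 : 0 < 1 - y 0 := by linarith [(hb 0).2]
          have h2 : 0 < ∏ i : Fin k, (y i.castSucc - y i.succ) := by
            apply Finset.prod_pos; intro i _
            have := ho i.castSucc i.succ (Fin.castSucc_lt_succ (i := i)); linarith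
          exact mul_pos h1 h2
        have hx1 : (fun x : ℝ => Set.indicator (S (k+2)) F (Fin.snoc y x)) =
            (Set.Ioo 0 (y (Fin.last k))).indicator (fun x => F (Fin.snoc y x)) := by
          funext x
          by_cases hx : x ∈ Set.Ioo 0 (y (Fin.last k))
          · rw [Set.indicator_of_mem ((snoc_mem_S y x).mpr ⟨⟨hb, ho⟩, hx⟩), Set.indicator_of_mem hx]
          · rw [Set.indicator_of_notMem (fun h => hx ((snoc_mem_S y x).mp h).2),
              Set.indicator_of_notMem hx]
        rw [hx1, lintegral_indicator measurableSet_Ioo]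
        have hcong : ∫⁻ x in Set.Ioo 0 (y (Fin.last k)), F (Fin.snoc y x)
            = ∫⁻ x in Set.Ioo 0 (y (Fin.last k)),
                ENNReal.ofReal ((Real.sqrt ((1 - y 0) * ∏ i : Fin k, (y i.castSucc - y i.succ)))⁻¹) *
                ENNReal.ofReal (x ^ a * (Real.sqrt (y (Fin.last k) - x))⁻¹) := by
          refine setLIntegral_congr_fun measurableSet_Ioo ?_
          intro x hx
          have e0 : (Fin.snoc y x : Fin (k+2) → ℝ) 0 = y 0 := by
            rw [show (0 : Fin (k+2)) = Fin.castSucc 0 from (Fin.castSucc_zero).symm,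
              Fin.snoc_castSucc]
          have elast : (Fin.snoc y x : Fin (k+2) → ℝ) (Fin.last (k+1)) = x := by
            rw [Fin.snoc_last]
          have eprod : (∏ i : Fin (k+1),
              ((Fin.snoc y x : Fin (k+2) → ℝ) i.castSucc - (Fin.snoc y x : Fin (k+2) → ℝ) i.succ))
              = (∏ i : Fin k, (y i.castSucc - y i.succ)) * (y (Fin.last k) - x) := by
            rw [Fin.prod_univ_castSucc]
            congr 1
            · refine Finset.prod_congr rfl fun i _ => ?_
              rw [Fin.succ_castSucc, Fin.snoc_castSucc, Fin.snoc_castSucc]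
            · rw [Fin.succ_last, Fin.snoc_castSucc, Fin.snoc_last]
          rw [hF]
          simp only [e0, elast, eprod]
          rw [show (1 - y 0) * ((∏ i : Fin k, (y i.castSucc - y i.succ)) * (y (Fin.last k) - x))
              = ((1 - y 0) * ∏ i : Fin k, (y i.castSucc - y i.succ)) * (y (Fin.last k) - x)
              from (mul_assoc _ _ _).symm,
            Real.sqrt_mul hA.le, mul_inv]
          rw [show x ^ a * ((Real.sqrt ((1 - y 0) * ∏ i : Fin k, (y i.castSucc - y i.succ)))⁻¹ *
              (Real.sqrt (y (Fin.last k) - x))⁻¹)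
              = (Real.sqrt ((1 - y 0) * ∏ i : Fin k, (y i.castSucc - y i.succ)))⁻¹ *
                (x ^ a * (Real.sqrt (y (Fin.last k) - x))⁻¹) from by ring]
          rw [ENNReal.ofReal_mul (by positivity)]
        rw [hcong, lintegral_const_mul' _ _ ENNReal.ofReal_ne_top, inner_lintegral ha hylast]
      · rw [Set.indicator_of_notMem hy]
        have hz : ∀ x : ℝ, Set.indicator (S (k+2)) F (Fin.snoc y x) = 0 := fun x =>
          Set.indicator_of_notMem (fun h => hy ((snoc_mem_S y x).mp h).1) _
        simp [hz]
    -- main chain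
    have MP := (measurePreserving_piFinSuccAbove (fun _ : Fin (k+2) => (volume : Measure ℝ))
        (Fin.last (k+1))).symm (MeasurableEquiv.piFinSuccAbove (fun _ => ℝ) (Fin.last (k+1)))
    rw [← lintegral_indicator (measurableSet_S _), volume_pi,
      ← MP.lintegral_comp_emb (MeasurableEquiv.measurableEmbedding _)]
    have hmeas2 : Measurable fun p : ℝ × (Fin (k+1) → ℝ) =>
        Set.indicator (S (k+2)) F ((MeasurableEquiv.piFinSuccAbove
          (fun _ : Fin (k+2) => ℝ) (Fin.last (k+1))).symm p) :=
      (hFmeas.indicator (measurableSet_S _)).comp (MeasurableEquiv.measurable _)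
    rw [lintegral_prod_symm _ hmeas2.aemeasurable]
    have hsymm : ∀ (x : ℝ) (y : Fin (k+1) → ℝ),
        (MeasurableEquiv.piFinSuccAbove (fun _ : Fin (k+2) => ℝ) (Fin.last (k+1))).symm (x, y)
          = Fin.snoc y x := by
      intro x y
      simp [MeasurableEquiv.piFinSuccAbove_symm_apply, Fin.snocEquiv]
    simp_rw [hsymm]
    rw [lintegral_congr (fun y => hinner y), lintegral_indicator (measurableSet_S _)]
    have houter : (∫⁻ y : Fin (k+1) → ℝ in S (k+1),
          ENNReal.ofReal ((Real.sqrt ((1 - y 0) * ∏ i : Fin k, (y i.castSucc - y i.succ)))⁻¹) *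
          ENNReal.ofReal ((y (Fin.last k)) ^ (a + 1/2) * C)
          ∂(Measure.pi fun _ => volume))
        = ∫⁻ y : Fin (k+1) → ℝ in S (k+1),
          (ENNReal.ofReal ((y (Fin.last k)) ^ (a + 1/2) *
            (Real.sqrt ((1 - y 0) * ∏ i : Fin k, (y i.castSucc - y i.succ)))⁻¹)) * ENNReal.ofReal C
          ∂(Measure.pi fun _ => volume) := by
      refine setLIntegral_congr_fun (measurableSet_S _) ?_
      intro y hy
      dsimp only
      have h0 : 0 < y (Fin.last k) := (hy.1 _).1
      rw [← ENNReal.ofReal_mul (by positivity), ← ENNReal.ofReal_mul (by positivity)]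
      congr 1
      ring
    rw [houter, lintegral_mul_const' _ _ ENNReal.ofReal_ne_top, ← volume_pi,
      ih (a + 1/2) (by linarith), ← ENNReal.ofReal_mul (by positivity)]
    congr 1
    have h32 : Gamma (a + 1/2 + 1) = Gamma (a + 1 + 1/2) := by ring_nf
    have hd : Gamma (a + 1/2 + 1 + ((k:ℝ)+1)/2) = Gamma (a + 1 + (((k+1:ℕ):ℝ)+1)/2) := by
      congr 1; push_cast; ring
    rw [hC, h32, hd]
    have hne1 : Gamma (a + 1 + 1/2) ≠ 0 := (Gamma_pos_of_pos (by linarith)).ne'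
    have hne2 : Gamma (a + 1 + (((k+1:ℕ):ℝ)+1)/2) ≠ 0 := by
      apply (Gamma_pos_of_pos _).ne'; push_cast; positivity
    field_simp
    ring


/-- For every `k ≥ 1` (encoded as `k+1` variables), the integral of
`1/√((1-r₁)(r₁-r₂)⋯(r_{k-1}-r_k))` over the ordered simplex
`0 < r_k < ⋯ < r₁ < 1` equals `Γ(1/2)^k / Γ((k+2)/2)`. -/
theorem simplex_gamma_identity (k : ℕ) :
    (∫ r : Fin (k + 1) → ℝ in
        {r | (∀ i, 0 < r i ∧ r i < 1) ∧ ∀ i j : Fin (k + 1), i < j → r j < r i},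
        (Real.sqrt ((1 - r 0) * ∏ i : Fin k, (r i.castSucc - r i.succ)))⁻¹)
      = Real.Gamma (1 / 2) ^ (k + 1) / Real.Gamma ((k + 1 + 2) / 2) := by
  have hkey := key_lemma k 0 (le_refl 0)
  simp only [Real.rpow_zero, one_mul] at hkey
  rw [show {r : Fin (k + 1) → ℝ | (∀ i, 0 < r i ∧ r i < 1) ∧
      ∀ i j : Fin (k + 1), i < j → r j < r i} = S (k+1) from rfl]
  rw [integral_eq_lintegral_of_nonneg_ae
    (Filter.Eventually.of_forall fun r => by positivity)
    (by apply Measurable.aestronglyMeasurable; fun_prop)]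
  rw [hkey, ENNReal.toReal_ofReal (by
    apply div_nonneg
    · exact mul_nonneg (Gamma_pos_of_pos (by norm_num)).le
        (pow_nonneg (Gamma_pos_of_pos (by norm_num)).le _)
    · apply (Gamma_pos_of_pos _).le; positivity)]
  rw [show (0:ℝ) + 1 + ((k:ℝ)+1)/2 = ((k:ℝ)+1+2)/2 by ring, show (0:ℝ)+1 = 1 by ring,
    Real.Gamma_one, one_mul]
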